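/- Let M be a positroid on [n] whose decorated permutation π^: has π(j) = j with color col(j) = -1 (j is a loop-free coloop-type fixed point, i.e., j lies in every basis). Then the decorated permutation of the contraction M/{j} is (π, col') where col'(j) = 1 and col'(i) = col(i) for i ≠ j. -/

import Mathlib

open Finset

/-- Position of `a` in the cyclic (linear) order starting at `t` on `Fin n`. -/
def cval {n : ℕ} (t a : Fin n) : ℕ := ((a - t : Fin n) : ℕ)

/-- Gale order on finsets of `Fin n` induced by the linear order with key `f`:
compare the sorted lists of keys coordinatewise. -/
def galeLEKey {n : ℕ} (f : Fin n → ℕ) (A B : Finset (Fin n)) : Prop :=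
  List.Forall₂ (· ≤ ·) ((A.image f).sort (· ≤ ·)) ((B.image f).sort (· ≤ ·))

/-- Gale order `≤_t` induced by the cyclic order starting at `t`. -/
def galeLE {n : ℕ} (t : Fin n) (A B : Finset (Fin n)) : Prop :=
  galeLEKey (cval t) A B

/-- The set of maximal elements of `D` w.r.t. `≤_a` (a singleton when `D` is nonempty). -/
def cmax {n : ℕ} (a : Fin n) (D : Finset (Fin n)) : Finset (Fin n) :=
  D.filter (fun x => ∀ y ∈ D, cval a y ≤ cval a x)

/-- The set of minimal elements of `D` w.r.t. `≤_a` (a singleton when `D` is nonempty). -/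
def cmin {n : ℕ} (a : Fin n) (D : Finset (Fin n)) : Finset (Fin n) :=
  D.filter (fun x => ∀ y ∈ D, cval a x ≤ cval a y)

/-- A Grassmann necklace on `[n]`. -/
def IsGrassmannNecklace {n : ℕ} [NeZero n] (I : Fin n → Finset (Fin n)) : Prop :=
  ∀ i : Fin n,
    (i ∈ I i → ∃ j : Fin n, I (i + 1) = insert j (I i \ {i})) ∧
    (i ∉ I i → I (i + 1) = I i)

/-- A decorated permutation: a permutation with fixed points colored by `1` or `-1`
(non-fixed points carry the dummy color `1`). -/
structure DecoratedPerm (n : ℕ) where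
  π : Equiv.Perm (Fin n)
  col : Fin n → ℤ
  col_fixed : ∀ i, π i = i → col i = 1 ∨ col i = -1
  col_nonfixed : ∀ i, π i ≠ i → col i = 1

/-- The Grassmann necklace associated to a decorated permutation:
`I_r = { i : i <_r π⁻¹(i), or π(i) = i and col(i) = -1 }`. -/
def necklaceOf {n : ℕ} (P : DecoratedPerm n) : Fin n → Finset (Fin n) :=
  fun r => Finset.univ.filter
    (fun i => cval r i < cval r (P.π.symm i) ∨ (P.π i = i ∧ P.col i = -1))

/-- The forward map from Grassmann necklaces to decorated permutations:
`P` corresponds to the necklace `I`. -/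
def Corresponds {n : ℕ} [NeZero n] (I : Fin n → Finset (Fin n)) (P : DecoratedPerm n) : Prop :=
  ∀ i : Fin n,
    ((I (i + 1) = I i ∧ i ∉ I i) → (P.π i = i ∧ P.col i = 1)) ∧
    ((I (i + 1) = I i ∧ i ∈ I i) → (P.π i = i ∧ P.col i = -1)) ∧
    (∀ j : Fin n, j ≠ i → i ∈ I i → I (i + 1) = insert j (I i \ {i}) → P.π i = j)

/-- `phiSet I j a` is `{j}` if `j ∈ I_a`, and otherwise `{max_a (I_a \ I_j)}`. -/
def phiSet {n : ℕ} (I : Fin n → Finset (Fin n)) (j a : Fin n) : Finset (Fin n) :=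
  if j ∈ I a then {j} else cmax a (I a \ I j)

/-- One pass of the contraction algorithm (fuel-indexed; the loop walks `a ← a+1`). -/
def contractLoop {n : ℕ} [NeZero n] (π : Equiv.Perm (Fin n)) (j : Fin n) :
    ℕ → (Fin n → Fin n) → (Fin n → ℤ) → Fin n → Fin n →
      (Fin n → Fin n) × (Fin n → ℤ)
  | 0, μ, c, q, a => (Function.update μ a q, c)
  | fuel + 1, μ, c, q, a =>
    if π a = j then (Function.update μ a q, c)
    else if q = a ∨ (cval (a + 1) q < cval (a + 1) (π a) ∧
                      cval (a + 1) (π a) < cval (a + 1) j) then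
      contractLoop π j fuel (Function.update μ a q)
        (if q = a then Function.update c a 1 else c) (π a) (a + 1)
    else
      contractLoop π j fuel μ c q (a + 1)

/-- The contraction algorithm: output `(μ, col')` from `(π, col)` and `j`. -/
def contractAlg {n : ℕ} [NeZero n] (π : Equiv.Perm (Fin n)) (col : Fin n → ℤ) (j : Fin n) :
    (Fin n → Fin n) × (Fin n → ℤ) :=
  contractLoop π j n (Function.update (⇑π) j j) (Function.update col j 1) (π j) (j + 1)

/-- One pass of the restriction algorithm (the loop walks `a ← a-1`). -/
def restrictLoop {n : ℕ} [NeZero n] (π : Equiv.Perm (Fin n)) (j : Fin n) :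
    ℕ → (Fin n → Fin n) → (Fin n → ℤ) → Fin n → Fin n →
      (Fin n → Fin n) × (Fin n → ℤ)
  | 0, μ, c, q, a => (Function.update μ a q, c)
  | fuel + 1, μ, c, q, a =>
    if π a = j then (Function.update μ a q, c)
    else if q = a ∨ (cval a j < cval a (π a) ∧ cval a (π a) < cval a q) then
      restrictLoop π j fuel (Function.update μ a q)
        (if q = a then Function.update c a 1 else c) (π a) (a - 1)
    else
      restrictLoop π j fuel μ c q (a - 1)

/-- The restriction algorithm: output `(μ, col')` from `(π, col)` and `j`. -/
def restrictAlg {n : ℕ} [NeZero n] (π : Equiv.Perm (Fin n)) (col : Fin n → ℤ) (j : Fin n) :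
    (Fin n → Fin n) × (Fin n → ℤ) :=
  restrictLoop π j n (Function.update (⇑π) j j) (Function.update col j 1) (π j) (j - 1)


section Aux

lemma cval_inj {n : ℕ} (t : Fin n) : Function.Injective (cval t) := by
  intro a b h
  haveI : NeZero n := NeZero.of_pos t.pos
  have h' : a - t = b - t := Fin.val_injective h
  have := congrArg (fun x => x + t) h'
  simpa using this

lemma cval_self {n : ℕ} (t : Fin n) : cval t t = 0 := by
  haveI : NeZero n := NeZero.of_pos t.pos
  simp [cval, sub_self]

lemma countP_le_of_forall2 {l1 l2 : List ℕ} (h : List.Forall₂ (· ≤ ·) l1 l2) (k : ℕ) :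
    l2.countP (· ≤ k) ≤ l1.countP (· ≤ k) := by
  induction h with
  | nil => simp
  | @cons a b l1 l2 hab h ih =>
      rw [List.countP_cons, List.countP_cons]
      by_cases hb : b ≤ k
      · have ha : a ≤ k := le_trans hab hb
        simp [ha, hb]; omega
      · simp [hb]; omega

lemma forall2_of_count : ∀ (l1 : List ℕ) {l2 : List ℕ}, l1.Pairwise (· ≤ ·) → l2.Pairwise (· ≤ ·) →
    l1.length = l2.length → (∀ k, l2.countP (· ≤ k) ≤ l1.countP (· ≤ k)) →
    List.Forall₂ (· ≤ ·) l1 l2 := by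
  intro l1
  induction l1 with
  | nil =>
      intro l2 _ _ hlen _
      cases l2 with
      | nil => exact List.Forall₂.nil
      | cons b l2 => simp at hlen
  | cons a l1 ih =>
      intro l2 h1 h2 hlen hcnt
      cases l2 with
      | nil => simp at hlen
      | cons b l2 =>
        have hab : a ≤ b := by
          by_contra hba
          have hz : (a :: l1).countP (· ≤ b) = 0 := by
            rw [List.countP_eq_zero]
            intro x hx
            have : a ≤ x := by
              rcases List.mem_cons.1 hx with rfl | hx
              · exact le_refl _
              · exact (List.pairwise_cons.1 h1).1 x hx
            simp only [decide_eq_true_eq]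
            omega
          have h := hcnt b
          rw [List.countP_cons, hz] at h
          simp at h
        refine List.Forall₂.cons hab (ih (List.pairwise_cons.1 h1).2 (List.pairwise_cons.1 h2).2
          (by simpa using hlen) ?_)
        intro k
        have h := hcnt k
        rw [List.countP_cons, List.countP_cons] at h
        by_cases hb : b ≤ k
        · have ha : a ≤ k := le_trans hab hb
          simp [ha, hb] at h
          omega
        · have hz : l2.countP (· ≤ k) = 0 := by
            rw [List.countP_eq_zero]
            intro x hx
            have : b ≤ x := (List.pairwise_cons.1 h2).1 x hx
            simp only [decide_eq_true_eq]
            omega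
          rw [hz]
          exact Nat.zero_le _

lemma countP_toList (s : Finset ℕ) (p : ℕ → Prop) [DecidablePred p] :
    s.toList.countP (fun x => decide (p x)) = (s.filter p).card := by
  rw [← Multiset.coe_countP]
  simp only [Finset.toList, Multiset.coe_toList, Multiset.countP_eq_card_filter]
  rfl

lemma countP_sort_image {n : ℕ} (f : Fin n → ℕ) (hf : Function.Injective f)
    (A : Finset (Fin n)) (k : ℕ) :
    ((A.image f).sort (· ≤ ·)).countP (· ≤ k) = (A.filter (fun x => f x ≤ k)).card := by
  rw [((A.image f).sort_perm_toList (· ≤ ·)).countP_eq]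
  rw [countP_toList]
  rw [Finset.filter_image, Finset.card_image_of_injective _ hf]

lemma galeLEKey_iff_count {n : ℕ} (f : Fin n → ℕ) (hf : Function.Injective f)
    (A B : Finset (Fin n)) :
    galeLEKey f A B ↔ A.card = B.card ∧
      ∀ k, (B.filter (fun x => f x ≤ k)).card ≤ (A.filter (fun x => f x ≤ k)).card := by
  constructor
  · intro h
    constructor
    · have := h.length_eq
      rwa [Finset.length_sort, Finset.length_sort,
        Finset.card_image_of_injective _ hf, Finset.card_image_of_injective _ hf] at this
    · intro k
      have := countP_le_of_forall2 h k
      rwa [countP_sort_image f hf, countP_sort_image f hf] at this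
  · rintro ⟨hcard, hcnt⟩
    refine forall2_of_count _ (Finset.pairwise_sort _ _) (Finset.pairwise_sort _ _) ?_ ?_
    · rw [Finset.length_sort, Finset.length_sort,
        Finset.card_image_of_injective _ hf, Finset.card_image_of_injective _ hf, hcard]
    · intro k
      rw [countP_sort_image f hf, countP_sort_image f hf]
      exact hcnt k

lemma galeLE_iff_count {n : ℕ} (t : Fin n) (A B : Finset (Fin n)) :
    galeLE t A B ↔ A.card = B.card ∧
      ∀ k, (B.filter (fun x => cval t x ≤ k)).card ≤ (A.filter (fun x => cval t x ≤ k)).card :=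
  galeLEKey_iff_count (cval t) (cval_inj t) A B

lemma gale_erase_of_gale {n : ℕ} (t j : Fin n) {A B : Finset (Fin n)} (hA : j ∈ A) (hB : j ∈ B)
    (h : galeLE t A B) : galeLE t (A.erase j) (B.erase j) := by
  rw [galeLE_iff_count] at h ⊢
  obtain ⟨hcard, hcnt⟩ := h
  constructor
  · rw [Finset.card_erase_of_mem hA, Finset.card_erase_of_mem hB, hcard]
  · intro k
    rw [Finset.filter_erase, Finset.filter_erase]
    by_cases hp : cval t j ≤ k
    · have hjA : j ∈ A.filter (fun x => cval t x ≤ k) := Finset.mem_filter.2 ⟨hA, hp⟩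
      have hjB : j ∈ B.filter (fun x => cval t x ≤ k) := Finset.mem_filter.2 ⟨hB, hp⟩
      rw [Finset.card_erase_of_mem hjA, Finset.card_erase_of_mem hjB]
      have h1 : 1 ≤ (A.filter (fun x => cval t x ≤ k)).card := Finset.card_pos.2 ⟨j, hjA⟩
      have h2 : 1 ≤ (B.filter (fun x => cval t x ≤ k)).card := Finset.card_pos.2 ⟨j, hjB⟩
      have := hcnt k
      omega
    · have hA' : j ∉ A.filter (fun x => cval t x ≤ k) := fun hm => hp (Finset.mem_filter.1 hm).2
      have hB' : j ∉ B.filter (fun x => cval t x ≤ k) := fun hm => hp (Finset.mem_filter.1 hm).2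
      rw [Finset.erase_eq_of_notMem hA', Finset.erase_eq_of_notMem hB']
      exact hcnt k

lemma gale_insert_of_gale {n : ℕ} (t j : Fin n) {A B : Finset (Fin n)} (hA : j ∉ A) (hB : j ∉ B)
    (h : galeLE t A B) : galeLE t (insert j A) (insert j B) := by
  rw [galeLE_iff_count] at h ⊢
  obtain ⟨hcard, hcnt⟩ := h
  constructor
  · rw [Finset.card_insert_of_notMem hA, Finset.card_insert_of_notMem hB, hcard]
  · intro k
    rw [Finset.filter_insert, Finset.filter_insert]
    by_cases hp : cval t j ≤ k
    · rw [if_pos hp, if_pos hp,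
        Finset.card_insert_of_notMem (fun hm => hA (Finset.mem_filter.1 hm).1),
        Finset.card_insert_of_notMem (fun hm => hB (Finset.mem_filter.1 hm).1)]
      have := hcnt k
      omega
    · rw [if_neg hp, if_neg hp]
      exact hcnt k

lemma not_mem_of_gale_erase {n : ℕ} (j : Fin n) {A H : Finset (Fin n)}
    (hjA : j ∉ A) (h : galeLE j A H) : j ∉ H := by
  intro hjH
  rw [galeLE_iff_count] at h
  have hcnt := h.2 0
  have hAz : A.filter (fun x => cval j x ≤ 0) = ∅ := by
    rw [Finset.filter_eq_empty_iff]
    intro x hx hle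
    have hx0 : cval j x = 0 := Nat.le_zero.1 hle
    have : x = j := cval_inj j (by rw [hx0, cval_self])
    exact hjA (this ▸ hx)
  have hjHf : j ∈ H.filter (fun x => cval j x ≤ 0) :=
    Finset.mem_filter.2 ⟨hjH, by rw [cval_self]⟩
  rw [hAz, Finset.card_empty, Nat.le_zero, Finset.card_eq_zero] at hcnt
  rw [hcnt] at hjHf
  exact absurd hjHf (Finset.notMem_empty j)

end Aux

/-- if `π(j) = j` with `col(j) = -1`, the decorated permutation of the
contraction `M/{j}` is `(π, col')` with `col'(j) = 1` and `col'(i) = col(i)` for `i ≠ j`. -/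
theorem contraction_of_coloop_fixed_point (n : ℕ) [NeZero n]
    (P : DecoratedPerm n) (j : Fin n) (h1 : P.π j = j) (h2 : P.col j = -1)
    (P' : DecoratedPerm n) (hπ : P'.π = P.π) (hcj : P'.col j = 1)
    (hc : ∀ i : Fin n, i ≠ j → P'.col i = P.col i) :
    ∀ H : Finset (Fin n),
      (∃ H' : Finset (Fin n),
          (∀ t : Fin n, galeLE t (necklaceOf P t) H') ∧ j ∈ H' ∧ H = H'.erase j) ↔
      (∀ t : Fin n, galeLE t (necklaceOf P' t) H) := by
  have hjI : ∀ t : Fin n, j ∈ necklaceOf P t := by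
    intro t
    simp only [necklaceOf, Finset.mem_filter, Finset.mem_univ, true_and]
    exact Or.inr ⟨h1, h2⟩
  have hsymm : P.π.symm j = j := P.π.symm_apply_eq.mpr h1.symm
  have hI' : ∀ t : Fin n, necklaceOf P' t = (necklaceOf P t).erase j := by
    intro t
    ext i
    simp only [necklaceOf, Finset.mem_filter, Finset.mem_univ, true_and, Finset.mem_erase, hπ]
    by_cases hij : i = j
    · subst hij
      simp [h1, hcj, hsymm]
    · simp [hij, hc i hij]
  intro H
  constructor
  · rintro ⟨H', hg, hjH', rfl⟩
    intro t
    rw [hI' t]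
    exact gale_erase_of_gale t j (hjI t) hjH' (hg t)
  · intro hg
    have hjH : j ∉ H := by
      have := hg j
      rw [hI' j] at this
      exact not_mem_of_gale_erase j (Finset.notMem_erase j _) this
    refine ⟨insert j H, ?_, Finset.mem_insert_self j H, (Finset.erase_insert hjH).symm⟩
    intro t
    have := gale_insert_of_gale t j (Finset.notMem_erase j _) hjH
      (by rw [← hI' t]; exact hg t)
    rwa [Finset.insert_erase (hjI t)] at this
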